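/- Fix ε ∈ (0, 1/2], integers U ≥ 1 and ℓ ≥ 0 such that 2^ℓ divides U, and d ∈ [0,1]. Write t = tanh(ε/2) and m = U/2^ℓ. Let b_1, …, b_m be i.i.d. Bernoulli(1/2 + t(d − 1/2)) random variables, let L be an independent real random variable with Laplace(0, 2^ℓ/(εU)) distribution, and define the estimator d̃ = (1/t)·((1/m)·Σ_{i=1}^m b_i − 1/2 + t/2) + L. Then E[d̃] = d, and the mean squared error satisfies E[(d̃ − d)²] ≤ 2^{ℓ−2}/(U·t²) + 2^{2ℓ+1}/(U²ε²). -/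

import Mathlib

open MeasureTheory ProbabilityTheory

/-- The law of a `Laplace(0, b)` random variable: the measure on `ℝ` with density
`x ↦ (1/(2b))·exp(−|x|/b)` with respect to Lebesgue measure. -/
noncomputable def laplaceMeasure (b : ℝ) : Measure ℝ :=
  volume.withDensity fun x => ENNReal.ofReal (1 / (2 * b) * Real.exp (-|x| / b))

open Real Set

lemma myIntegrable_comp_abs {f : ℝ → ℝ} (hf : IntegrableOn f (Ioi 0)) :
    Integrable (fun x => f |x|) := by
  have hf' : IntegrableOn (fun x => f |x|) (Ioi 0) := by
    refine hf.congr_fun (fun x hx => ?_) measurableSet_Ioi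
    rw [abs_of_pos hx]
  have int_Iic : IntegrableOn (fun x ↦ f |x|) (Iic 0) := by
    rw [← Measure.map_neg_eq_self (volume : Measure ℝ)]
    let m : MeasurableEmbedding fun x : ℝ => -x := (Homeomorph.neg ℝ).measurableEmbedding
    rw [m.integrableOn_map_iff]
    simp_rw [Function.comp_def, abs_neg, neg_preimage, neg_Iic, neg_zero]
    exact (integrableOn_Ici_iff_integrableOn_Ioi).mpr hf'
  have := int_Iic.union hf'
  rwa [Iic_union_Ioi, integrableOn_univ] at this

lemma myIntegral_odd_eq_zero {f : ℝ → ℝ} (hf : Integrable f)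
    (hodd : ∀ x, f (-x) = -f x) : ∫ x, f x = 0 := by
  have h1 : ∫ x in Iic (0:ℝ), f x = - ∫ x in Ioi (0:ℝ), f x := by
    have h2 := integral_comp_neg_Ioi (0:ℝ) f
    simp_rw [hodd, integral_neg, neg_zero] at h2
    linarith
  rw [← intervalIntegral.integral_Iic_add_Ioi hf.integrableOn hf.integrableOn, h1,
    neg_add_cancel]


lemma lap_dens_nonneg (x : ℝ) (hβ : 0 < β) : 0 ≤ 1 / (2 * β) * Real.exp (-|x| / β) := by
  positivity

lemma lap_integrableOn_pow_exp (k : ℕ) (hβ : 0 < β) :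
    IntegrableOn (fun x : ℝ => x ^ k * Real.exp (-(β⁻¹ * x))) (Ioi 0) := by
  have h := integrableOn_rpow_mul_exp_neg_mul_rpow (p := 1) (s := (k : ℝ))
    (b := β⁻¹) (by exact_mod_cast neg_one_lt_zero.trans_le (Nat.cast_nonneg k)) one_pos (by positivity)
  refine h.congr_fun (fun x hx => ?_) measurableSet_Ioi
  beta_reduce
  rw [Real.rpow_natCast, Real.rpow_one, neg_mul]

lemma lap_integral_pow_exp_one (hβ : 0 < β) :
    ∫ x : ℝ in Ioi 0, x * Real.exp (-(β⁻¹ * x)) = β ^ 2 := by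
  have h := integral_rpow_mul_exp_neg_mul_Ioi (a := 2) (r := β⁻¹) (by norm_num) (by positivity)
  rw [show (2:ℝ) - 1 = 1 by norm_num] at h
  simp_rw [Real.rpow_one] at h
  rw [h, one_div, inv_inv, Real.Gamma_two, mul_one,
    show (2:ℝ) = ((2:ℕ):ℝ) by norm_num, Real.rpow_natCast]

lemma lap_integral_pow_exp_two (hβ : 0 < β) :
    ∫ x : ℝ in Ioi 0, x ^ 2 * Real.exp (-(β⁻¹ * x)) = 2 * β ^ 3 := by
  have h := integral_rpow_mul_exp_neg_mul_Ioi (a := 3) (r := β⁻¹) (by norm_num) (by positivity)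
  rw [show (3:ℝ) - 1 = ((2:ℕ):ℝ) by norm_num] at h
  simp_rw [Real.rpow_natCast] at h
  rw [h, one_div, inv_inv, show (3:ℝ) = ((2:ℕ):ℝ) + 1 by norm_num,
    Real.Gamma_nat_eq_factorial, show ((Nat.factorial 2 : ℕ) : ℝ) = 2 by norm_num [Nat.factorial],
    show ((2:ℕ):ℝ) + 1 = ((3:ℕ):ℝ) by norm_num, Real.rpow_natCast]
  ring

variable {β : ℝ}

lemma lap_dens_nonneg_aux (β x : ℝ) (hβ : 0 < β) :
    0 ≤ 1 / (2 * β) * Real.exp (-|x| / β) := by positivity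

lemma lap_eq (hβ : 0 < β) : laplaceMeasure β =
    volume.withDensity fun x =>
      ((Real.toNNReal (1 / (2 * β) * Real.exp (-|x| / β)) : NNReal) : ENNReal) := rfl

lemma lap_nn_meas (hβ : 0 < β) :
    Measurable (fun x => Real.toNNReal (1 / (2 * β) * Real.exp (-|x| / β))) := by
  measurability

lemma lap_integral_eq (hβ : 0 < β) (g : ℝ → ℝ) :
    ∫ x, g x ∂(laplaceMeasure β) = ∫ x, (1 / (2 * β) * Real.exp (-|x| / β)) * g x := by
  rw [lap_eq hβ, integral_withDensity_eq_integral_smul (lap_nn_meas hβ)]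
  congr 1; ext x
  rw [NNReal.smul_def, smul_eq_mul, Real.coe_toNNReal _ (by positivity)]

lemma lap_integrable_iff (hβ : 0 < β) (g : ℝ → ℝ) :
    Integrable g (laplaceMeasure β) ↔
      Integrable (fun x => (1 / (2 * β) * Real.exp (-|x| / β)) * g x) := by
  rw [lap_eq hβ, integrable_withDensity_iff_integrable_smul (lap_nn_meas hβ)]
  constructor <;> intro h <;> refine h.congr (Filter.Eventually.of_forall fun x => ?_) <;>
    simp only [NNReal.smul_def, smul_eq_mul, Real.coe_toNNReal _ (lap_dens_nonneg_aux β x hβ)]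

lemma lap_comp_abs_eq (hβ : 0 < β) (k : ℕ) (x : ℝ) :
    (1 / (2 * β) * Real.exp (-|x| / β)) * |x| ^ k
      = 1 / (2 * β) * (|x| ^ k * Real.exp (-(β⁻¹ * |x|))) := by
  rw [show -(β⁻¹ * |x|) = -|x| / β by field_simp]
  ring

lemma lap_integrableOn_aux (hβ : 0 < β) (k : ℕ) :
    IntegrableOn (fun y : ℝ => 1 / (2 * β) * (y ^ k * Real.exp (-(β⁻¹ * y)))) (Ioi 0) :=
  (lap_integrableOn_pow_exp k hβ).const_mul _

lemma lap_maj_integrable (hβ : 0 < β) (k : ℕ) :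
    Integrable (fun x : ℝ => 1 / (2 * β) * (|x| ^ k * Real.exp (-(β⁻¹ * |x|)))) :=
  myIntegrable_comp_abs (f := fun y => 1 / (2 * β) * (y ^ k * Real.exp (-(β⁻¹ * y))))
    (lap_integrableOn_aux hβ k)

lemma lap_integrable_mul_pow_one (hβ : 0 < β) :
    Integrable (fun x => (1 / (2 * β) * Real.exp (-|x| / β)) * x) := by
  refine (lap_maj_integrable hβ 1).mono'
    (Measurable.aestronglyMeasurable (by measurability))
    (Filter.Eventually.of_forall fun x => ?_)
  rw [norm_mul, Real.norm_eq_abs, Real.norm_eq_abs,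
    abs_of_nonneg (lap_dens_nonneg_aux β x hβ)]
  rw [← lap_comp_abs_eq hβ 1 x, pow_one]

lemma lap_integral_id (hβ : 0 < β) : ∫ x, x ∂(laplaceMeasure β) = 0 := by
  rw [lap_integral_eq hβ]
  refine myIntegral_odd_eq_zero (lap_integrable_mul_pow_one hβ) fun x => by
    rw [abs_neg]; ring

lemma lap_sq_eq (hβ : 0 < β) : (fun x : ℝ => (1 / (2 * β) * Real.exp (-|x| / β)) * x ^ 2)
    = fun x : ℝ => 1 / (2 * β) * (|x| ^ 2 * Real.exp (-(β⁻¹ * |x|))) := by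
  ext x
  rw [← lap_comp_abs_eq hβ 2 x, sq_abs]

lemma lap_integrable_mul_sq (hβ : 0 < β) :
    Integrable (fun x => (1 / (2 * β) * Real.exp (-|x| / β)) * x ^ 2) := by
  rw [lap_sq_eq hβ]; exact lap_maj_integrable hβ 2

lemma lap_integral_sq (hβ : 0 < β) :
    ∫ x, x ^ 2 ∂(laplaceMeasure β) = 2 * β ^ 2 := by
  rw [lap_integral_eq hβ, lap_sq_eq hβ,
    integral_comp_abs (f := fun y => 1 / (2 * β) * (y ^ 2 * Real.exp (-(β⁻¹ * y)))),
    integral_const_mul, lap_integral_pow_exp_two hβ]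
  field_simp

lemma lap_integrable_id' (hβ : 0 < β) : Integrable (fun x : ℝ => x) (laplaceMeasure β) :=
  (lap_integrable_iff hβ _).2 (lap_integrable_mul_pow_one hβ)

lemma lap_integrable_sq' (hβ : 0 < β) : Integrable (fun x : ℝ => x ^ 2) (laplaceMeasure β) :=
  (lap_integrable_iff hβ _).2 (lap_integrable_mul_sq hβ)


set_option maxHeartbeats 1000000 in
/-- Bias and mean squared error of Pan-Private Distinct Sampling (PPDS) at fixed level `ℓ`:
with `t = tanh(ε/2)` and `m = U/2^ℓ`, if `b_1, …, b_m` are i.i.d.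
`Bernoulli(1/2 + t(d − 1/2))`, `L` is an independent `Laplace(0, 2^ℓ/(εU))` random
variable, and `d̃ = (1/t)((1/m)∑ b_i − 1/2 + t/2) + L`, then `E[d̃] = d` and
`E[(d̃ − d)²] ≤ 2^{ℓ−2}/(U·t²) + 2^{2ℓ+1}/(U²ε²)`. -/
theorem stmt_13 {Ω : Type*} [MeasurableSpace Ω] (P : Measure Ω) [IsProbabilityMeasure P]
    (ε : ℝ) (hε0 : 0 < ε) (hε1 : ε ≤ 1 / 2) (U ℓ : ℕ) (hU : 1 ≤ U)
    (hdvd : 2 ^ ℓ ∣ U) (m : ℕ) (hm : m = U / 2 ^ ℓ) (d : ℝ)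
    (hd : d ∈ Set.Icc (0 : ℝ) 1)
    (t : ℝ) (ht : t = Real.tanh (ε / 2))
    (b : Fin m → Ω → ℝ) (L : Ω → ℝ)
    (hbmeas : ∀ i, Measurable (b i)) (hLmeas : Measurable L)
    (hb01 : ∀ i ω, b i ω = 0 ∨ b i ω = 1)
    (hbdist : ∀ i, P {ω | b i ω = 1} = ENNReal.ofReal (1 / 2 + t * (d - 1 / 2)))
    (hLlaw : Measure.map L P = laplaceMeasure (2 ^ ℓ / (ε * U)))
    (hindep : iIndepFun (fun o : Option (Fin m) => Option.elim o L b) P) :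
    (∫ ω, ((1 / t) * ((1 / (m : ℝ)) * ∑ i, b i ω - 1 / 2 + t / 2) + L ω) ∂P) = d ∧
    (∫ ω, (((1 / t) * ((1 / (m : ℝ)) * ∑ i, b i ω - 1 / 2 + t / 2) + L ω) - d) ^ 2 ∂P) ≤
      ((2 : ℝ) ^ ℓ / 4) / (U * t ^ 2) + 2 ^ (2 * ℓ + 1) / (U ^ 2 * ε ^ 2) := by
  -- basic positivity facts
  have ht0 : 0 < t := by
    rw [ht, Real.tanh_eq_sinh_div_cosh]
    exact div_pos (Real.sinh_pos_iff.mpr (by linarith)) (Real.cosh_pos _)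
  have ht1 : t < 1 := by
    rw [ht, Real.tanh_eq_sinh_div_cosh, div_lt_one (Real.cosh_pos _)]
    nlinarith [Real.cosh_sub_sinh (ε / 2), Real.exp_pos (-(ε / 2))]
  have hm1 : 1 ≤ m := by
    rw [hm]
    exact (Nat.one_le_div_iff (Nat.pow_pos (by norm_num))).mpr
      (Nat.le_of_dvd (by omega) hdvd)
  have hmpos : (0 : ℝ) < m := by exact_mod_cast hm1
  have hUm : (U : ℝ) = 2 ^ ℓ * m := by
    have : m * 2 ^ ℓ = U := by rw [hm]; exact Nat.div_mul_cancel hdvd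
    push_cast [← this]; ring
  have hUpos : (0 : ℝ) < U := by exact_mod_cast hU
  set p : ℝ := 1 / 2 + t * (d - 1 / 2) with hp
  have hp0 : 0 ≤ p := by
    rcases hd with ⟨hd0, hd1⟩; rw [hp]; nlinarith
  have hp1 : p ≤ 1 := by
    rcases hd with ⟨hd0, hd1⟩; rw [hp]; nlinarith
  set β : ℝ := 2 ^ ℓ / (ε * U) with hβdef
  have hβ : 0 < β := by positivity
  -- Laplace moments
  have hLint : Integrable L P := by
    have := (integrable_map_measure (aestronglyMeasurable_id (μ := Measure.map L P))
      hLmeas.aemeasurable).mp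
    rw [hLlaw] at this
    exact this (lap_integrable_id' hβ)
  have hL2int : Integrable (fun ω => L ω ^ 2) P := by
    have := (integrable_map_measure
      (g := fun x : ℝ => x ^ 2)
      ((measurable_id.pow_const 2).aestronglyMeasurable (μ := Measure.map L P))
      hLmeas.aemeasurable).mp
    rw [hLlaw] at this
    exact this (lap_integrable_sq' hβ)
  have hEL : ∫ ω, L ω ∂P = 0 := by
    have h := integral_map (μ := P) hLmeas.aemeasurable
      (f := fun x : ℝ => x) (aestronglyMeasurable_id)
    rw [hLlaw, lap_integral_id hβ] at h
    exact h.symm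
  have hEL2 : ∫ ω, L ω ^ 2 ∂P = 2 * β ^ 2 := by
    have h := integral_map (μ := P) hLmeas.aemeasurable
      (f := fun x : ℝ => x ^ 2)
      ((measurable_id.pow_const 2).aestronglyMeasurable)
    rw [hLlaw, lap_integral_sq hβ] at h
    exact h.symm
  -- Bernoulli facts
  have hb_nonneg : ∀ i ω, 0 ≤ b i ω := by
    intro i ω; rcases hb01 i ω with h | h <;> rw [h] <;> norm_num
  have hb_le : ∀ i ω, b i ω ≤ 1 := by
    intro i ω; rcases hb01 i ω with h | h <;> rw [h] <;> norm_num
  have hbmem2 : ∀ i, MemLp (b i) 2 P := fun i =>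
    MemLp.of_bound (hbmeas i).aestronglyMeasurable 1
      (Filter.Eventually.of_forall fun ω => by
        rw [Real.norm_eq_abs, abs_of_nonneg (hb_nonneg i ω)]; exact hb_le i ω)
  have hbint : ∀ i, Integrable (b i) P := fun i => (hbmem2 i).integrable one_le_two
  have hEb : ∀ i, ∫ ω, b i ω ∂P = p := by
    intro i
    have hind : b i = Set.indicator {ω | b i ω = 1} (fun _ => (1 : ℝ)) := by
      funext ω
      rcases hb01 i ω with h | h
      · rw [h, Set.indicator_of_notMem (by simp [Set.mem_setOf_eq, h])]
      · rw [h, Set.indicator_of_mem (by simp [Set.mem_setOf_eq, h])]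
    have hAA : MeasurableSet {ω | b i ω = 1} := by
      have : {ω | b i ω = 1} = b i ⁻¹' {1} := rfl
      rw [this]; exact (hbmeas i) (measurableSet_singleton 1)
    calc ∫ ω, b i ω ∂P = ∫ ω, Set.indicator {ω | b i ω = 1} (fun _ => (1:ℝ)) ω ∂P := by
          rw [← hind]
      _ = (P {ω | b i ω = 1}).toReal • (1:ℝ) := integral_indicator_const (1:ℝ) hAA
      _ = p := by rw [hbdist i, ENNReal.toReal_ofReal hp0, smul_eq_mul, mul_one]
  have hvarb : ∀ i, variance (b i) P = p - p ^ 2 := by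
    intro i
    rw [variance_eq_sub (hbmem2 i)]
    have hsq : ∫ ω, (b i ^ 2) ω ∂P = p := by
      have he : ∀ ω, (b i ^ 2) ω = b i ω := fun ω => by
        rcases hb01 i ω with h | h <;> simp [h]
      calc ∫ ω, (b i ^ 2) ω ∂P = ∫ ω, b i ω ∂P :=
            integral_congr_ae (Filter.Eventually.of_forall he)
        _ = p := hEb i
    rw [hsq, hEb i]
  -- the sum Y
  set Y : Ω → ℝ := ∑ i, b i with hYdef
  have hYapp : ∀ ω, Y ω = ∑ i, b i ω := fun ω => Finset.sum_apply ω Finset.univ b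
  have hYint : Integrable Y P :=
    (integrable_finset_sum Finset.univ fun i _ => hbint i).congr
      (Filter.Eventually.of_forall fun ω => (hYapp ω).symm)
  have hEY : ∫ ω, Y ω ∂P = m * p := by
    simp_rw [hYapp]
    rw [integral_finset_sum Finset.univ fun i _ => hbint i]
    simp [hEb, Finset.sum_const, Finset.card_univ]
  have hYmem2 : MemLp Y 2 P :=
    MemLp.of_bound (hYint.aestronglyMeasurable) m
      (Filter.Eventually.of_forall fun ω => by
        rw [hYapp, Real.norm_eq_abs,
          abs_of_nonneg (Finset.sum_nonneg fun i _ => hb_nonneg i ω)]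
        calc ∑ i, b i ω ≤ ∑ _i : Fin m, (1:ℝ) :=
              Finset.sum_le_sum fun i _ => hb_le i ω
          _ = m := by simp)
  -- pairwise independence and variance of Y
  have hpair : Set.Pairwise ↑(Finset.univ : Finset (Fin m))
      fun i j => IndepFun (b i) (b j) P := by
    intro i _ j _ hij
    exact hindep.indepFun (by simpa using hij : (some i : Option (Fin m)) ≠ some j)
  have hvarY : variance Y P = m * (p - p ^ 2) := by
    rw [hYdef, IndepFun.variance_sum (fun i _ => hbmem2 i) hpair]
    simp [hvarb, Finset.sum_const, Finset.card_univ]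
    ring
  -- independence of Y and L
  have homeas : ∀ o : Option (Fin m), Measurable (Option.elim o L b) := by
    rintro (_ | i); exacts [hLmeas, hbmeas i]
  have hYL : IndepFun Y L P := by
    have h := hindep.indepFun_finsetSum_of_notMem homeas
      (s := Finset.univ.image Option.some) (i := none) (by simp)
    have hsum : (∑ j ∈ Finset.univ.image Option.some, Option.elim j L b) = Y := by
      rw [Finset.sum_image (fun x _ y _ h => Option.some_injective _ h)]
      rfl
    rwa [hsum] at h
  -- centered variables
  set Yc : Ω → ℝ := fun ω => Y ω - m * p with hYc
  have hYcint : Integrable Yc P := hYint.sub (integrable_const _)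
  have hYcmem2 : MemLp Yc 2 P := hYmem2.sub (memLp_const _)
  have hEYc : ∫ ω, Yc ω ∂P = 0 := by
    rw [hYc]
    rw [integral_sub hYint (integrable_const _), hEY, integral_const]
    simp
  have hYc2int : Integrable (fun ω => Yc ω ^ 2) P := by
    have := hYcmem2.integrable_sq
    simpa [Pi.pow_apply] using this
  have hYcL : IndepFun Yc L P := by
    have h := hYL.comp (φ := fun y : ℝ => y - m * p) (ψ := id)
      (measurable_id.sub_const _) measurable_id
    exact h
  have hYcLint : Integrable (fun ω => Yc ω * L ω) P := by
    have := Integrable.bdd_mul (c := (m : ℝ) + m * p) hLint hYcint.aestronglyMeasurable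
      (Filter.Eventually.of_forall fun ω => by
        show |Y ω - (m : ℝ) * p| ≤ (m : ℝ) + m * p
        have h1 : Y ω ≤ m := by
          rw [hYapp]
          calc ∑ i, b i ω ≤ ∑ _i : Fin m, (1:ℝ) :=
                Finset.sum_le_sum fun i _ => hb_le i ω
            _ = m := by simp
        have h2 : 0 ≤ Y ω := by
          rw [hYapp]; exact Finset.sum_nonneg fun i _ => hb_nonneg i ω
        rw [abs_le]
        constructor <;> nlinarith)
    exact this
  have hEYcL : ∫ ω, Yc ω * L ω ∂P = 0 := by
    have h := hYcL.integral_mul_eq_mul_integral hYcint.aestronglyMeasurable hLint.aestronglyMeasurable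
    have h' : ∫ ω, Yc ω * L ω ∂P = (∫ ω, Yc ω ∂P) * ∫ ω, L ω ∂P := h
    rw [h', hEYc, zero_mul]
  have hEYc2 : ∫ ω, Yc ω ^ 2 ∂P = m * (p - p ^ 2) := by
    have h : variance Y P = ∫ ω, ((Y - fun _ => ∫ ω, Y ω ∂P) ^ (2:ℕ) : Ω → ℝ) ω ∂P :=
      variance_eq_integral hYmem2.aestronglyMeasurable.aemeasurable
    rw [hvarY] at h
    have : (fun ω => Yc ω ^ 2) = ((Y - fun _ => ∫ ω, Y ω ∂P) ^ (2:ℕ)) := by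
      funext ω
      simp [Pi.pow_apply, Pi.sub_apply, hYc, hEY]
    rw [this, ← h]
  -- the estimator
  have hZint : Integrable
      (fun ω => (1 / t) * ((1 / (m : ℝ)) * Y ω - 1 / 2 + t / 2)) P := by
    have h1 : Integrable (fun ω => (1 / (m : ℝ)) * Y ω) P := hYint.const_mul _
    have h2 : Integrable (fun ω => (1 / (m : ℝ)) * Y ω - 1 / 2) P :=
      h1.sub (integrable_const _)
    have h3 : Integrable (fun ω => (1 / (m : ℝ)) * Y ω - 1 / 2 + t / 2) P :=
      h2.add (integrable_const _)
    exact h3.const_mul _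
  have hkey : ∀ ω, (1 / t) * ((1 / (m : ℝ)) * Y ω - 1 / 2 + t / 2) + L ω - d
      = (1 / (t * (m : ℝ))) * Yc ω + L ω := by
    intro ω
    rw [hYc, hp]
    field_simp
    ring
  constructor
  · -- unbiasedness
    simp_rw [← hYapp]
    have h1 : Integrable (fun ω => (1 / (m : ℝ)) * Y ω) P := hYint.const_mul _
    have h2 : Integrable (fun ω => (1 / (m : ℝ)) * Y ω - 1 / 2) P :=
      h1.sub (integrable_const _)
    rw [integral_add hZint hLint, hEL, add_zero, integral_const_mul,
      integral_add h2 (integrable_const _), integral_sub h1 (integrable_const _),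
      integral_const_mul, hEY]
    simp only [integral_const, measure_univ, probReal_univ, ENNReal.toReal_one, one_smul, smul_eq_mul, one_mul]
    rw [hp]
    field_simp
    ring
  · -- mean squared error
    simp_rw [← hYapp]
    have hexp : (fun ω => ((1 / t) * ((1 / (m : ℝ)) * Y ω - 1 / 2 + t / 2) + L ω - d) ^ 2)
        = fun ω => (1 / (t * (m : ℝ))) ^ 2 * Yc ω ^ 2
            + (2 * (1 / (t * (m : ℝ)))) * (Yc ω * L ω) + L ω ^ 2 := by
      funext ω
      rw [hkey ω]
      ring
    have f1int : Integrable (fun ω => (1 / (t * (m : ℝ))) ^ 2 * Yc ω ^ 2) P :=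
      hYc2int.const_mul _
    have f2int : Integrable (fun ω => (2 * (1 / (t * (m : ℝ)))) * (Yc ω * L ω)) P :=
      hYcLint.const_mul _
    have f12int : Integrable (fun ω => (1 / (t * (m : ℝ))) ^ 2 * Yc ω ^ 2
        + (2 * (1 / (t * (m : ℝ)))) * (Yc ω * L ω)) P := f1int.add f2int
    rw [hexp, integral_add f12int hL2int, integral_add f1int f2int,
      integral_const_mul, integral_const_mul, hEYc2, hEYcL, hEL2, mul_zero, add_zero]
    have hterm1 : (1 / (t * (m : ℝ))) ^ 2 * ((m : ℝ) * (p - p ^ 2))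
        ≤ ((2 : ℝ) ^ ℓ / 4) / (U * t ^ 2) := by
      have hpp : p - p ^ 2 ≤ 1 / 4 := by nlinarith [sq_nonneg (p - 1/2)]
      have hpp0 : 0 ≤ p - p ^ 2 := by nlinarith [hp0, hp1]
      have e1 : (1 / (t * (m : ℝ))) ^ 2 * ((m : ℝ) * (p - p ^ 2))
          = (p - p ^ 2) / (t ^ 2 * m) := by
        field_simp
      have e2 : ((2 : ℝ) ^ ℓ / 4) / (U * t ^ 2) = (1 / 4) / (t ^ 2 * (m : ℝ)) := by
        rw [hUm]
        have h2l : (0:ℝ) < 2 ^ ℓ := by positivity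
        field_simp
      rw [e1, e2]
      gcongr
    have hterm2 : 2 * β ^ 2 = 2 ^ (2 * ℓ + 1) / ((U : ℝ) ^ 2 * ε ^ 2) := by
      rw [hβdef, pow_add, pow_mul, pow_one, div_pow, mul_pow]
      field_simp
      rw [← pow_mul, ← pow_mul, Nat.mul_comm ℓ 2]
    rw [hterm2]
    gcongr
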